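/- Let p be an odd prime with p coprime to 3. An element (x, y) of the finite quadratic form (-1/6) ⊕ (-1/(2p²)) on C₆ ⊕ C_{2p²} is isotropic (i.e. p²x² + 3y² ≡ 0 mod 12p²) if and only if (x, y) is of the form (0, 2kp) or (3, (2k+1)p) for some integer k. -/

import Mathlib

/-- Let p be an odd prime with p coprime to 3. An element (x, y) of the
finite quadratic form (-1/6) ⊕ (-1/(2p²)) on C₆ ⊕ C_{2p²} is isotropic
(i.e. p²x² + 3y² ≡ 0 mod 12p²) iff (x,y) is of the form (0, 2kp) or (3, (2k+1)p). -/
theorem stmt_0 (p : ℕ) (hp : p.Prime) (hodd : Odd p) (h3 : Nat.Coprime p 3)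
    (x y : ℤ) :
    ((12 * (p : ℤ) ^ 2) ∣ ((p : ℤ) ^ 2 * x ^ 2 + 3 * y ^ 2)) ↔
      ((∃ k : ℤ, x ≡ 0 [ZMOD 6] ∧ y ≡ 2 * k * (p : ℤ) [ZMOD 2 * (p : ℤ) ^ 2]) ∨
       (∃ k : ℤ, x ≡ 3 [ZMOD 6] ∧ y ≡ (2 * k + 1) * (p : ℤ) [ZMOD 2 * (p : ℤ) ^ 2])) := by
  have hpne : (p : ℤ) ≠ 0 := by exact_mod_cast hp.ne_zero
  have hp_int : Prime (p : ℤ) := Nat.prime_iff_prime_int.mp hp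
  constructor
  · intro h
    -- p divides y
    have hpy : (p : ℤ) ∣ y := by
      have h1 : (p : ℤ) ∣ 3 * y ^ 2 := by
        have h2 : (p : ℤ) ∣ (p : ℤ) ^ 2 * x ^ 2 + 3 * y ^ 2 :=
          dvd_trans (dvd_trans (dvd_pow_self _ two_ne_zero) (dvd_mul_left _ _)) h
        have h3' : (p : ℤ) ∣ (p : ℤ) ^ 2 * x ^ 2 :=
          dvd_trans (dvd_pow_self _ two_ne_zero) (dvd_mul_right _ _)
        have := dvd_sub h2 h3'
        simpa using this
      rcases hp_int.dvd_mul.mp h1 with h4 | h4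
      · exfalso
        have : p ∣ 3 := by exact_mod_cast h4
        have hg := Nat.dvd_gcd dvd_rfl this
        rw [h3] at hg
        exact hp.one_lt.ne' (Nat.eq_one_of_dvd_one hg)
      · exact hp_int.dvd_of_dvd_pow h4
    obtain ⟨m, hm⟩ := hpy
    obtain ⟨c, hc⟩ := h
    have hc' : x ^ 2 + 3 * m ^ 2 = 12 * c := by
      have hq : (p : ℤ) ^ 2 * (x ^ 2 + 3 * m ^ 2) = (p : ℤ) ^ 2 * (12 * c) := by
        rw [hm] at hc; linear_combination hc
      exact mul_left_cancel₀ (pow_ne_zero 2 hpne) hq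
    set r := x % 6 with hr
    set a := x / 6 with ha
    set s := m % 2 with hs
    set b := m / 2 with hb
    have hx6 : x = 6 * a + r := by rw [ha, hr]; omega
    have hm2 : m = 2 * b + s := by rw [hb, hs]; omega
    have hrb : 0 ≤ r ∧ r < 6 := ⟨Int.emod_nonneg x (by norm_num), Int.emod_lt_of_pos x (by norm_num)⟩
    have hsb : 0 ≤ s ∧ s < 2 := ⟨Int.emod_nonneg m (by norm_num), Int.emod_lt_of_pos m (by norm_num)⟩
    have key : (12 : ℤ) ∣ r ^ 2 + 3 * s ^ 2 := by
      refine ⟨c - (3 * a ^ 2 + a * r + b ^ 2 + b * s), ?_⟩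
      have := hc'
      rw [hx6, hm2] at this
      linear_combination this
    obtain ⟨hr1, hr2⟩ := hrb
    obtain ⟨hs1, hs2⟩ := hsb
    have haux : (r = 0 ∧ s = 0) ∨ (r = 3 ∧ s = 1) := by
      interval_cases r <;> interval_cases s <;> omega
    rcases haux with ⟨hre, hse⟩ | ⟨hre, hse⟩
    · left
      obtain ⟨k, hk⟩ : ∃ k, m = 2 * k := ⟨b, by omega⟩
      refine ⟨k, ?_, ?_⟩
      · rw [Int.modEq_iff_dvd]; omega
      · have hy2 : y = 2 * k * (p : ℤ) := by rw [hm, hk]; ring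
        exact hy2 ▸ Int.ModEq.refl _
    · right
      obtain ⟨k, hk⟩ : ∃ k, m = 2 * k + 1 := ⟨b, by omega⟩
      refine ⟨k, ?_, ?_⟩
      · rw [Int.modEq_iff_dvd]; omega
      · have hy2 : y = (2 * k + 1) * (p : ℤ) := by rw [hm, hk]; ring
        exact hy2 ▸ Int.ModEq.refl _
  · rintro (⟨k, hx, hy⟩ | ⟨k, hx, hy⟩)
    · obtain ⟨a, hax'⟩ := Int.modEq_iff_dvd.mp hx
      have hax : x = 6 * (-a) := by linarith [hax']
      obtain ⟨t, ht⟩ := Int.modEq_iff_dvd.mp hy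
      -- ht : 2*k*p - y = 2*p^2*t
      refine ⟨3 * a ^ 2 + (k - (p : ℤ) * t) ^ 2, ?_⟩
      have hyv : y = 2 * k * (p : ℤ) - 2 * (p : ℤ) ^ 2 * t := by linarith [ht]
      rw [hax, hyv]; ring
    · obtain ⟨a, hax⟩ := Int.modEq_iff_dvd.mp hx
      -- hax : 3 - x = 6*a, so x = 3 - 6*a
      obtain ⟨t, ht⟩ := Int.modEq_iff_dvd.mp hy
      refine ⟨1 - 3 * a + 3 * a ^ 2 + (k - (p : ℤ) * t) ^ 2 + (k - (p : ℤ) * t), ?_⟩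
      have hxv : x = 3 - 6 * a := by linarith [hax]
      have hyv : y = (2 * k + 1) * (p : ℤ) - 2 * (p : ℤ) ^ 2 * t := by linarith [ht]
      rw [hxv, hyv]; ring
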